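/- Let (A,D) be a Γ-Cartan pair with faithful conditional expectation Δ : A → D. Then for every homogeneous normalizer n of D and every a ∈ A, n*Δ(a)n = Δ(n*an). -/

import Mathlib

open scoped ComplexOrder

set_option linter.unusedSectionVars false
set_option synthInstance.maxHeartbeats 400000
set_option maxHeartbeats 1600000

namespace GCS10

section Core
variable {A : Type*} [NormedRing A] [StarRing A] [CStarRing A] [NormedAlgebra ℂ A]
  [CompleteSpace A] [StarModule ℂ A] [PartialOrder A] [StarOrderedRing A]

noncomputable local instance instCSA : CStarAlgebra A :=
  { ‹NormedRing A›, ‹StarRing A›, ‹CStarRing A›, ‹NormedAlgebra ℂ A›, ‹CompleteSpace A›,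
    ‹StarModule ℂ A› with }

variable {D : StarSubalgebra ℂ A} [IsClosed (D : Set A)]

/-- Normalizer of `D` in `A`. -/
def IsNrm (D : StarSubalgebra ℂ A) (v : A) : Prop :=
  ∀ d ∈ D, v * d * star v ∈ D ∧ star v * d * v ∈ D

lemma nrmStar {v : A} (hv : IsNrm D v) : IsNrm D (star v) := by
  intro d hd
  constructor
  · simpa [star_star] using (hv d hd).2
  · simpa [star_star] using (hv d hd).1

lemma nrmQ {v : A} (hv : IsNrm D v) : star v * v ∈ D := by
  simpa using (hv 1 (one_mem D)).2

lemma nrmP {v : A} (hv : IsNrm D v) : v * star v ∈ D := by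
  simpa using (hv 1 (one_mem D)).1

lemma chEq (χ : WeakDual.characterSpace ℂ ↥D) {a b : A} (ha : a ∈ D) (hb : b ∈ D) (h : a = b) :
    χ ⟨a, ha⟩ = χ ⟨b, hb⟩ := by
  congr 1; exact Subtype.ext h

lemma chMul (χ : WeakDual.characterSpace ℂ ↥D) {a b c : A} (ha : a ∈ D) (hb : b ∈ D) (hc : c ∈ D)
    (h : a * b = c) : χ ⟨c, hc⟩ = χ ⟨a, ha⟩ * χ ⟨b, hb⟩ := by
  have : (⟨a, ha⟩ : ↥D) * ⟨b, hb⟩ = ⟨c, hc⟩ := Subtype.ext h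
  rw [← this, map_mul]

lemma chSub (χ : WeakDual.characterSpace ℂ ↥D) {a b c : A} (ha : a ∈ D) (hb : b ∈ D) (hc : c ∈ D)
    (h : a - b = c) : χ ⟨c, hc⟩ = χ ⟨a, ha⟩ - χ ⟨b, hb⟩ := by
  have : (⟨a, ha⟩ : ↥D) - ⟨b, hb⟩ = ⟨c, hc⟩ := Subtype.ext h
  rw [← this, map_sub]

lemma chSmul (χ : WeakDual.characterSpace ℂ ↥D) {a b : A} (z : ℂ) (ha : a ∈ D) (hb : b ∈ D)
    (h : z • a = b) : χ ⟨b, hb⟩ = z * χ ⟨a, ha⟩ := by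
  have : z • (⟨a, ha⟩ : ↥D) = ⟨b, hb⟩ := Subtype.ext h
  rw [← this, map_smul, smul_eq_mul]

lemma chOne (χ : WeakDual.characterSpace ℂ ↥D) (h1 : (1 : A) ∈ D) : χ ⟨1, h1⟩ = 1 := by
  have : (⟨1, h1⟩ : ↥D) = 1 := Subtype.ext rfl
  rw [this, map_one]

lemma chZero (χ : WeakDual.characterSpace ℂ ↥D) (h0 : (0 : A) ∈ D) : χ ⟨0, h0⟩ = 0 := by
  have : (⟨0, h0⟩ : ↥D) = 0 := Subtype.ext rfl
  rw [this, map_zero]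

lemma chStar (hDclosed : IsClosed (D : Set A)) (χ : WeakDual.characterSpace ℂ ↥D) {a b : A}
    (ha : a ∈ D) (hb : b ∈ D) (h : star a = b) :
    χ ⟨b, hb⟩ = starRingEnd ℂ (χ ⟨a, ha⟩) := by
  haveI : IsClosed ((D : Set A)) := hDclosed
  have : Star.star (⟨a, ha⟩ : ↥D) = ⟨b, hb⟩ := Subtype.ext h
  rw [← this, map_star]
  simp [RCLike.star_def]

lemma chNonneg (hDclosed : IsClosed (D : Set A)) (χ : WeakDual.characterSpace ℂ ↥D) {a : A}
    (ha : a ∈ D) (h : 0 ≤ a) : 0 ≤ χ ⟨a, ha⟩ := by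
  haveI : IsClosed ((D : Set A)) := hDclosed
  have h1 : χ ⟨a, ha⟩ ∈ spectrum ℂ (⟨a, ha⟩ : ↥D) :=
    WeakDual.CharacterSpace.apply_mem_spectrum χ _
  rw [StarSubalgebra.spectrum_eq] at h1
  exact spectrum_nonneg_of_nonneg h h1

lemma chMono (hDclosed : IsClosed (D : Set A)) (χ : WeakDual.characterSpace ℂ ↥D) {a b : A}
    (ha : a ∈ D) (hb : b ∈ D) (h : a ≤ b) : χ ⟨a, ha⟩ ≤ χ ⟨b, hb⟩ := by
  have h0 : (0:A) ≤ b - a := sub_nonneg.mpr h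
  have h2 := chNonneg hDclosed χ (sub_mem hb ha) h0
  have h3 := chSub χ hb ha (sub_mem hb ha) rfl
  rw [h3] at h2
  have := sub_nonneg.mp h2
  exact this

lemma chZeroAll (hDcomm : ∀ d ∈ D, ∀ e ∈ D, d * e = e * d) (hDclosed : IsClosed (D : Set A))
    {a : A} (ha : a ∈ D) (hsa : IsSelfAdjoint a)
    (h : ∀ χ : WeakDual.characterSpace ℂ ↥D, χ ⟨a, ha⟩ = 0) : a = 0 := by
  haveI : IsClosed ((D : Set A)) := hDclosed
  letI : CommCStarAlgebra ↥D :=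
    { (inferInstance : CStarAlgebra ↥D) with
      mul_comm := fun a b => Subtype.ext (hDcomm a a.2 b b.2) }
  have hsa' : IsSelfAdjoint (⟨a, ha⟩ : ↥D) := Subtype.ext hsa.star_eq
  have h1 : spectrum ℂ (⟨a, ha⟩ : ↥D) ⊆ {0} := by
    intro z hz
    obtain ⟨χ, hχ⟩ := WeakDual.CharacterSpace.mem_spectrum_iff_exists.mp hz
    simp [← hχ, h χ]
  have h2 := hsa'.spectralRadius_eq_nnnorm
  have h3 : spectralRadius ℂ (⟨a, ha⟩ : ↥D) ≤ 0 := by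
    rw [spectralRadius]
    exact iSup₂_le fun z hz => by simp [Set.mem_singleton_iff.mp (h1 hz)]
  rw [h2] at h3
  have h4 : ‖(⟨a, ha⟩ : ↥D)‖₊ = 0 := by simpa using h3
  have h5 : (⟨a, ha⟩ : ↥D) = 0 := by simpa using h4
  simpa [Subtype.ext_iff] using h5


-- Complex order helpers
lemma cplx_eq_re {z : ℂ} (h : 0 ≤ z) : z = (z.re : ℂ) :=
  Complex.ext rfl (by simpa using (Complex.nonneg_iff.mp h).2.symm)

lemma cplx_div_nonneg {z w : ℂ} (hz : 0 ≤ z) (hw : 0 < w) : 0 ≤ z / w := by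
  rw [cplx_eq_re hz, cplx_eq_re hw.le, ← Complex.ofReal_div]
  exact Complex.zero_le_real.mpr (div_nonneg (Complex.zero_le_real.mp (by rw [← cplx_eq_re hz]; exact hz)) (Complex.zero_le_real.mp (by rw [← cplx_eq_re hw.le]; exact hw.le)))

lemma cplx_div_le_div {a a' b : ℂ} (h : a ≤ a') (hb : 0 < b) : a / b ≤ a' / b := by
  have h1 : 0 ≤ (a' - a) / b := cplx_div_nonneg (sub_nonneg.mpr h) hb
  have h2 : (a' - a) / b = a' / b - a / b := sub_div _ _ _
  rw [h2] at h1
  exact sub_nonneg.mp h1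

lemma cplx_conj_self_nonneg (z : ℂ) : 0 ≤ z * (starRingEnd ℂ) z := by
  rw [Complex.mul_conj]
  exact Complex.zero_le_real.mpr (Complex.normSq_nonneg z)

lemma cplx_conj_self_pos {z : ℂ} (hz : z ≠ 0) : 0 < z * (starRingEnd ℂ) z := by
  rw [Complex.mul_conj]
  exact Complex.zero_lt_real.mpr (Complex.normSq_pos.mpr hz)

-- normalizers multiply
lemma nrmMul {v w : A} (hv : IsNrm D v) (hw : IsNrm D w) : IsNrm D (v * w) := by
  intro d hd
  constructor
  · have h1 : (v * w) * d * star (v * w) = v * (w * d * star w) * star v := by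
      simp only [star_mul]; noncomm_ring
    rw [h1]; exact (hv _ (hw d hd).1).1
  · have h1 : star (v * w) * d * (v * w) = star w * (star v * d * v) * w := by
      simp only [star_mul]; noncomm_ring
    rw [h1]; exact (hw _ (hv d hd).2).2

-- conjugation maps on ↥D
def cnjR (v : A) (hv : IsNrm D v) : ↥D → ↥D := fun z => ⟨star v * (z : A) * v, (hv z z.2).2⟩

lemma cnjR_coe (v : A) (hv : IsNrm D v) (z : ↥D) : (cnjR v hv z : A) = star v * (z : A) * v := rfl

lemma cnjR_mul (hDcomm : ∀ d ∈ D, ∀ e ∈ D, d * e = e * d) (v : A) (hv : IsNrm D v) (z w : ↥D) :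
    cnjR v hv z * cnjR v hv w = ⟨star v * v, nrmQ hv⟩ * cnjR v hv (z * w) := by
  apply Subtype.ext
  show (star v * (z:A) * v) * (star v * (w:A) * v) = (star v * v) * (star v * ((z:A)*(w:A)) * v)
  have hc : (z : A) * (v * star v) = (v * star v) * (z : A) := hDcomm _ z.2 _ (nrmP hv)
  calc (star v * (z:A) * v) * (star v * (w:A) * v)
      = star v * ((z:A) * (v * star v)) * ((w:A) * v) := by noncomm_ring
    _ = star v * ((v * star v) * (z:A)) * ((w:A) * v) := by rw [hc]
    _ = (star v * v) * (star v * ((z:A)*(w:A)) * v) := by noncomm_ring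

lemma cnjR_one (v : A) (hv : IsNrm D v) : cnjR v hv 1 = ⟨star v * v, nrmQ hv⟩ := by
  apply Subtype.ext; show star v * (1:A) * v = star v * v; rw [mul_one]

lemma cnjR_sub (v : A) (hv : IsNrm D v) (z w : ↥D) :
    cnjR v hv (z - w) = cnjR v hv z - cnjR v hv w := by
  apply Subtype.ext
  show star v * ((z:A) - (w:A)) * v = (star v * (z:A) * v) - (star v * (w:A) * v)
  noncomm_ring

lemma cnjR_add (v : A) (hv : IsNrm D v) (z w : ↥D) :
    cnjR v hv (z + w) = cnjR v hv z + cnjR v hv w := by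
  apply Subtype.ext
  show star v * ((z:A) + (w:A)) * v = (star v * (z:A) * v) + (star v * (w:A) * v)
  noncomm_ring

lemma cnjR_smul (v : A) (hv : IsNrm D v) (a : ℂ) (z : ↥D) :
    cnjR v hv (a • z) = a • cnjR v hv z := by
  apply Subtype.ext
  show star v * (a • (z:A)) * v = a • (star v * (z:A) * v)
  rw [mul_smul_comm, smul_mul_assoc]

lemma cnjR_star (v : A) (hv : IsNrm D v) (z : ↥D) :
    cnjR v hv (star z) = star (cnjR v hv z) := by
  apply Subtype.ext
  show star v * (star (z:A)) * v = star (star v * (z:A) * v)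
  simp only [star_mul, star_star]; noncomm_ring

lemma cnjR_nonneg (v : A) (hv : IsNrm D v) (z : ↥D) (h : 0 ≤ (z : A)) :
    0 ≤ (cnjR v hv z : A) := star_left_conjugate_nonneg h v

lemma cnjR_mono (v : A) (hv : IsNrm D v) (z w : ↥D) (h : (z : A) ≤ (w : A)) :
    (cnjR v hv z : A) ≤ (cnjR v hv w : A) := star_left_conjugate_le_conjugate h v

-- the conditional expectation inequality (Cauchy-Schwarz style)
lemma ce_dom {ED : A →ₗ[ℂ] A} (hEDmem : ∀ a, ED a ∈ D) (hEDfix : ∀ d ∈ D, ED d = d)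
    (hEDstar : ∀ a, ED (star a) = star (ED a)) (hEDpos : ∀ a : A, 0 ≤ a → 0 ≤ ED a)
    (hEDbimod : ∀ a : A, ∀ d ∈ D, ED (d * a) = d * ED a ∧ ED (a * d) = ED a * d)
    (v : A) (hv : IsNrm D v) {d : A} (hd : d ∈ D) (hd0 : 0 ≤ d) :
    star (ED v) * d * ED v ≤ star v * d * v := by
  have hEv : ED v ∈ D := hEDmem v
  have h1 : (0:A) ≤ star (v - ED v) * d * (v - ED v) := star_left_conjugate_nonneg hd0 _
  have h2 : star (v - ED v) * d * (v - ED v)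
      = (star v * d * v - (star v * d) * ED v) - ((star (ED v) * d) * v - star (ED v) * d * ED v) := by
    simp only [star_sub]; noncomm_ring
  have e1 : ED (star v * d * v) = star v * d * v := hEDfix _ (hv d hd).2
  have e2 : ED ((star v * d) * ED v) = star (ED v) * d * ED v := by
    rw [(hEDbimod (star v * d) (ED v) hEv).2]
    have : ED (star v * d) = star (ED v) * d := by
      rw [(hEDbimod (star v) d hd).2, hEDstar]
    rw [this]
  have e3 : ED ((star (ED v) * d) * v) = star (ED v) * d * ED v := by
    rw [(hEDbimod v (star (ED v) * d) (mul_mem (star_mem hEv) hd)).1]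
  have e4 : ED (star (ED v) * d * ED v) = star (ED v) * d * ED v :=
    hEDfix _ (mul_mem (mul_mem (star_mem hEv) hd) hEv)
  have h3 : ED (star (v - ED v) * d * (v - ED v)) = star v * d * v - star (ED v) * d * ED v := by
    rw [h2, map_sub, map_sub, map_sub, e1, e2, e3, e4]; abel
  have h4 := hEDpos _ h1
  rw [h3] at h4
  exact sub_nonneg.mp h4

-- Cauchy-Schwarz: ED g * star (ED g) ≤ ED (g * star g)
lemma cs_self {ED : A →ₗ[ℂ] A} (hEDmem : ∀ a, ED a ∈ D) (hEDfix : ∀ d ∈ D, ED d = d)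
    (hEDstar : ∀ a, ED (star a) = star (ED a)) (hEDpos : ∀ a : A, 0 ≤ a → 0 ≤ ED a)
    (hEDbimod : ∀ a : A, ∀ d ∈ D, ED (d * a) = d * ED a ∧ ED (a * d) = ED a * d)
    (g : A) : ED g * star (ED g) ≤ ED (g * star g) := by
  have hEg : ED g ∈ D := hEDmem g
  have h1 : (0:A) ≤ (g - ED g) * star (g - ED g) := mul_star_self_nonneg _
  have h2 : (g - ED g) * star (g - ED g)
      = (g * star g - g * star (ED g)) - (ED g * star g - ED g * star (ED g)) := by
    simp only [star_sub]; noncomm_ring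
  have e2 : ED (g * star (ED g)) = ED g * star (ED g) :=
    (hEDbimod g (star (ED g)) (star_mem hEg)).2
  have e3 : ED (ED g * star g) = ED g * star (ED g) := by
    rw [(hEDbimod (star g) (ED g) hEg).1, hEDstar]
  have e4 : ED (ED g * star (ED g)) = ED g * star (ED g) :=
    hEDfix _ (mul_mem hEg (star_mem hEg))
  have h3 : ED ((g - ED g) * star (g - ED g)) = ED (g * star g) - ED g * star (ED g) := by
    rw [h2, map_sub, map_sub, map_sub, e2, e3, e4]; abel
  have h4 := hEDpos _ h1
  rw [h3] at h4
  exact sub_nonneg.mp h4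


lemma chMonoD (χ : WeakDual.characterSpace ℂ ↥D) (z w : ↥D) (h : (z : A) ≤ (w : A)) :
    χ z ≤ χ w := by
  have := chMono (D := D) ‹IsClosed (D : Set A)› χ z.2 w.2 h
  simpa using this

lemma chNonnegD (χ : WeakDual.characterSpace ℂ ↥D) (z : ↥D) (h : 0 ≤ (z : A)) :
    0 ≤ χ z := by
  have := chNonneg (D := D) ‹IsClosed (D : Set A)› χ z.2 h
  simpa using this

lemma chZeroAllD (hDcomm : ∀ d ∈ D, ∀ e ∈ D, d * e = e * d) (z : ↥D)
    (hsa : IsSelfAdjoint (z : A)) (h : ∀ χ : WeakDual.characterSpace ℂ ↥D, χ z = 0) :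
    (z : A) = 0 := by
  have := chZeroAll (D := D) hDcomm ‹IsClosed (D : Set A)› z.2 hsa (fun χ => by simpa using h χ)
  exact this

lemma chStarD (χ : WeakDual.characterSpace ℂ ↥D) (z : ↥D) :
    χ (star z) = starRingEnd ℂ (χ z) := by
  haveI : IsClosed ((D : Set A)) := ‹_›
  rw [map_star]
  simp [RCLike.star_def]

/-- The first masa lemma: commutators with `D` annihilate the adjoint of the expectation
of a normalizer. -/
lemma nugget1 (hDcomm : ∀ d ∈ D, ∀ e ∈ D, d * e = e * d)
    {ED : A →ₗ[ℂ] A} (hEDmem : ∀ a, ED a ∈ D) (hEDfix : ∀ d ∈ D, ED d = d)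
    (hEDstar : ∀ a, ED (star a) = star (ED a)) (hEDpos : ∀ a : A, 0 ≤ a → 0 ≤ ED a)
    (hEDbimod : ∀ a : A, ∀ d ∈ D, ED (d * a) = d * ED a ∧ ED (a * d) = ED a * d)
    (v : A) (hv : IsNrm D v) {d : A} (hd : d ∈ D) (hsd : star d = d) :
    (d * v - v * d) * star (ED v) = 0 := by
  have hEv : ED v ∈ D := hEDmem v
  set EvD : ↥D := ⟨ED v, hEv⟩ with hEvD
  set dd : ↥D := ⟨d, hd⟩ with hdd
  set θ : ↥D := ⟨star v * v, nrmQ hv⟩ with hθ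
  set Nm : ↥D := cnjR v hv (dd*dd) - cnjR v hv dd * dd - dd * cnjR v hv dd + dd * θ * dd with hNm
  have hNmcoe : (Nm : A) = star v * (d*d) * v - (star v * d * v) * d - d * (star v * d * v)
      + d * (star v * v) * d := by
    simp [hNm, cnjR_coe, hdd, hθ]
  set x : A := (d * v - v * d) * star (ED v) with hx
  have hid : star x * x = ((EvD * Nm * star EvD : ↥D) : A) := by
    have hcoe2 : ((EvD * Nm * star EvD : ↥D) : A) = ED v * (Nm : A) * star (ED v) := by
      simp [hEvD]
    rw [hcoe2, hNmcoe, hx]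
    simp only [star_mul, star_sub, star_star, hsd]
    noncomm_ring
  have hzero : ((EvD * Nm * star EvD : ↥D) : A) = 0 := by
    apply chZeroAllD hDcomm
    · rw [← hid]
      show star (star x * x) = star x * x
      rw [star_mul, star_star]
    · intro χ
      have hfac : χ (EvD * Nm * star EvD) = χ EvD * χ Nm * starRingEnd ℂ (χ EvD) := by
        rw [map_mul, map_mul, chStarD]
      by_cases he : χ EvD = 0
      · rw [hfac, he]; ring
      · suffices hNv0 : χ Nm = 0 by rw [hfac, hNv0]; ring
        set φ : ↥D → ℂ := fun z => χ (cnjR v hv z) with hφ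
        set ξ : ℂ := χ θ with hξ
        have hmul : ∀ z w : ↥D, φ z * φ w = ξ * φ (z * w) := by
          intro z w
          rw [hφ]
          show χ (cnjR v hv z) * χ (cnjR v hv w) = ξ * χ (cnjR v hv (z*w))
          rw [← map_mul, cnjR_mul hDcomm, map_mul, ← hθ, hξ]
        have hφ1 : φ 1 = ξ := by
          rw [hφ]; show χ (cnjR v hv 1) = ξ; rw [cnjR_one, ← hθ, hξ]
        have hφsub : ∀ z w : ↥D, φ (z - w) = φ z - φ w := by
          intro z w; rw [hφ]; show χ (cnjR v hv (z-w)) = _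
          rw [cnjR_sub, map_sub]
        have hφsmul : ∀ (a : ℂ) (z : ↥D), φ (a • z) = a * φ z := by
          intro a z; rw [hφ]; show χ (cnjR v hv (a • z)) = _
          rw [cnjR_smul, map_smul, smul_eq_mul]
        have hdom : ∀ z : ↥D, 0 ≤ (z : A) →
            starRingEnd ℂ (χ EvD) * χ z * χ EvD ≤ φ z := by
          intro z hz
          have hA : star (ED v) * (z:A) * ED v ≤ star v * (z:A) * v :=
            ce_dom hEDmem hEDfix hEDstar hEDpos hEDbimod v hv z.2 hz
          have h1 : χ (star EvD * z * EvD) ≤ χ (cnjR v hv z) := by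
            apply chMonoD
            simpa [hEvD, cnjR_coe] using hA
          have h2 : χ (star EvD * z * EvD) = starRingEnd ℂ (χ EvD) * χ z * χ EvD := by
            rw [map_mul, map_mul, chStarD]
          rw [← h2]; exact h1
        have h0le1 : (0:A) ≤ ((1 : ↥D) : A) := by
          have := star_mul_self_nonneg (1 : A)
          simpa using this
        have hξpos : 0 < ξ := by
          have h1 := hdom 1 h0le1
          rw [map_one, hφ1, mul_one] at h1
          have hpos : 0 < starRingEnd ℂ (χ EvD) * χ EvD := by
            have := cplx_conj_self_pos he
            calc (0:ℂ) < χ EvD * starRingEnd ℂ (χ EvD) := this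
              _ = starRingEnd ℂ (χ EvD) * χ EvD := by ring
          exact lt_of_lt_of_le hpos h1
        have hξne : ξ ≠ 0 := ne_of_gt hξpos
        have key : ∀ z : ↥D, φ z = ξ * χ z := by
          by_contra hcon
          push_neg at hcon
          obtain ⟨y, hy⟩ := hcon
          set u : ↥D := ξ • y - (φ y) • 1 with hu
          have hχu : χ u = ξ * χ y - φ y := by
            rw [hu, map_sub, map_smul, map_smul, map_one, smul_eq_mul, smul_eq_mul, mul_one]
          have hχune : χ u ≠ 0 := by
            rw [hχu]
            exact sub_ne_zero.mpr (fun h => hy h.symm)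
          have hφu : φ u = 0 := by
            rw [hu, hφsub, hφsmul, hφsmul, hφ1]
            ring
          set u2 : ↥D := u * star u with hu2
          have hu2nn : 0 ≤ (u2 : A) := by
            have : (u2 : A) = (u : A) * star (u : A) := by simp [hu2]
            rw [this]; exact mul_star_self_nonneg _
          have hχu2 : χ u2 = χ u * starRingEnd ℂ (χ u) := by
            rw [hu2, map_mul, chStarD]
          have hχu2pos : 0 < χ u2 := by rw [hχu2]; exact cplx_conj_self_pos hχune
          have hφu2 : φ u2 = 0 := by
            have h1 := hmul u (star u)
            rw [hφu, zero_mul, ← hu2] at h1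
            exact (mul_eq_zero.mp h1.symm).resolve_left hξne
          have h1 := hdom u2 hu2nn
          rw [hφu2] at h1
          have h2 : 0 < starRingEnd ℂ (χ EvD) * χ u2 * χ EvD := by
            have hpos : 0 < χ EvD * starRingEnd ℂ (χ EvD) := cplx_conj_self_pos he
            calc (0:ℂ) < (χ EvD * starRingEnd ℂ (χ EvD)) * χ u2 := mul_pos hpos hχu2pos
              _ = starRingEnd ℂ (χ EvD) * χ u2 * χ EvD := by ring
          exact h2.not_ge h1
        have hdec : χ Nm = φ (dd*dd) - φ dd * χ dd - χ dd * φ dd + χ dd * ξ * χ dd := by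
          rw [hNm]
          rw [map_add, map_sub, map_sub, map_mul, map_mul, map_mul, map_mul]
        rw [hdec, key (dd*dd), key dd, map_mul]
        ring
  have hx0 : star x * x = 0 := by rw [hid, hzero]
  exact CStarRing.star_mul_self_eq_zero_iff x |>.mp hx0


/-- Key structural fact: for a normalizer `v` of `D` lying in `A0`,
`v * star (ED v) = ED v * star (ED v)`. -/
lemma c5 (hDcomm : ∀ d ∈ D, ∀ e ∈ D, d * e = e * d)
    {ED : A →ₗ[ℂ] A} (hEDmem : ∀ a, ED a ∈ D) (hEDfix : ∀ d ∈ D, ED d = d)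
    (hEDstar : ∀ a, ED (star a) = star (ED a)) (hEDpos : ∀ a : A, 0 ≤ a → 0 ≤ ED a)
    (hEDbimod : ∀ a : A, ∀ d ∈ D, ED (d * a) = d * ED a ∧ ED (a * d) = ED a * d)
    (A0 : Submodule ℂ A) (hA0mul : ∀ a ∈ A0, ∀ b ∈ A0, a * b ∈ A0)
    (hD0 : (D : Set A) ⊆ (A0 : Set A))
    (hDmasa : ∀ a ∈ A0, (∀ d ∈ D, a * d = d * a) → a ∈ D)
    (v : A) (hv : IsNrm D v) (hv0 : v ∈ A0) :
    v * star (ED v) = ED v * star (ED v) := by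
  have hEv : ED v ∈ D := hEDmem v
  have hsa : ∀ d ∈ D, star d = d → v * star (ED v) * d = d * (v * star (ED v)) := by
    intro d hd hsd
    have h0 : (d * v - v * d) * star (ED v) = 0 :=
      nugget1 hDcomm hEDmem hEDfix hEDstar hEDpos hEDbimod v hv hd hsd
    have hc : star (ED v) * d = d * star (ED v) := hDcomm _ (star_mem hEv) _ hd
    have h1 : d * (v * star (ED v)) - v * star (ED v) * d
        = (d * v - v * d) * star (ED v) + (v * (d * star (ED v)) - v * (star (ED v) * d)) := by
      noncomm_ring
    rw [hc] at h1
    have h2 : d * (v * star (ED v)) - v * star (ED v) * d = 0 := by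
      rw [h1, h0]; abel
    have := sub_eq_zero.mp h2
    exact this.symm
  have hcomm : ∀ d ∈ D, v * star (ED v) * d = d * (v * star (ED v)) := by
    intro d hd
    set dR : A := (2⁻¹ : ℂ) • (d + star d) with hdR
    set dI : A := (-(Complex.I)/2) • (d - star d) with hdI
    have hdRD : dR ∈ D := by
      rw [hdR]; exact SMulMemClass.smul_mem _ (add_mem hd (star_mem hd))
    have hdID : dI ∈ D := by
      rw [hdI]; exact SMulMemClass.smul_mem _ (sub_mem hd (star_mem hd))
    have hdRsa : star dR = dR := by
      rw [hdR, star_smul, star_add, star_star]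
      congr 1
      · simp
      · rw [add_comm]
    have hdIsa : star dI = dI := by
      rw [hdI, star_smul, star_sub, star_star]
      have h1 : star (-(Complex.I)/2) = Complex.I / 2 := by
        simp [Complex.star_def]
      rw [h1]
      have h2 : (Complex.I / 2) • (star d - d) = (-(Complex.I)/2) • (d - star d) := by
        have : star d - d = -(d - star d) := by abel
        rw [this, smul_neg, ← neg_smul]
        congr 1
        ring
      rw [h2]
    have hdecomp : d = dR + Complex.I • dI := by
      have hIco : Complex.I * (-(Complex.I)/2) = (2⁻¹ : ℂ) := by
        rw [mul_div_assoc', mul_neg, Complex.I_mul_I]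
        norm_num
      rw [hdR, hdI, smul_smul, hIco]
      have h1 : ((2⁻¹:ℂ) + 2⁻¹) • d = d := by norm_num
      calc d = ((2⁻¹:ℂ) + 2⁻¹) • d + ((2⁻¹:ℂ) • star d - (2⁻¹:ℂ) • star d) := by
            rw [h1]; abel
        _ = (2⁻¹:ℂ) • (d + star d) + (2⁻¹:ℂ) • (d - star d) := by
            rw [add_smul, smul_add, smul_sub]; abel
    have hR := hsa dR hdRD hdRsa
    have hI := hsa dI hdID hdIsa
    have hI' : v * star (ED v) * (Complex.I • dI) = (Complex.I • dI) * (v * star (ED v)) := by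
      rw [mul_smul_comm, smul_mul_assoc, hI]
    rw [hdecomp, mul_add, add_mul, hR, hI']
  have hzD : v * star (ED v) ∈ D := by
    apply hDmasa _ (hA0mul v hv0 _ (hD0 (star_mem hEv)))
    intro d hd
    exact hcomm d hd
  calc v * star (ED v) = ED (v * star (ED v)) := (hEDfix _ hzD).symm
    _ = ED v * star (ED v) := (hEDbimod v (star (ED v)) (star_mem hEv)).2


def cnjL (v : A) (hv : IsNrm D v) : ↥D → ↥D := fun z => ⟨v * (z : A) * star v, (hv z z.2).1⟩

lemma cnjL_coe (v : A) (hv : IsNrm D v) (z : ↥D) : (cnjL v hv z : A) = v * (z : A) * star v := rfl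

lemma cnjL_mul (hDcomm : ∀ d ∈ D, ∀ e ∈ D, d * e = e * d) (v : A) (hv : IsNrm D v) (z w : ↥D) :
    cnjL v hv z * cnjL v hv w = ⟨v * star v, nrmP hv⟩ * cnjL v hv (z * w) := by
  apply Subtype.ext
  show (v * (z:A) * star v) * (v * (w:A) * star v) = (v * star v) * (v * ((z:A)*(w:A)) * star v)
  have hc : (z : A) * (star v * v) = (star v * v) * (z : A) := hDcomm _ z.2 _ (nrmQ hv)
  calc (v * (z:A) * star v) * (v * (w:A) * star v)
      = v * ((z:A) * (star v * v)) * ((w:A) * star v) := by noncomm_ring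
    _ = v * ((star v * v) * (z:A)) * ((w:A) * star v) := by rw [hc]
    _ = (v * star v) * (v * ((z:A)*(w:A)) * star v) := by noncomm_ring

lemma cnjL_one (v : A) (hv : IsNrm D v) : cnjL v hv 1 = ⟨v * star v, nrmP hv⟩ := by
  apply Subtype.ext; show v * (1:A) * star v = v * star v; rw [mul_one]

lemma cnjL_zero (v : A) (hv : IsNrm D v) : cnjL v hv 0 = 0 := by
  apply Subtype.ext; show v * (0:A) * star v = 0; simp

lemma cnjL_sub (v : A) (hv : IsNrm D v) (z w : ↥D) :
    cnjL v hv (z - w) = cnjL v hv z - cnjL v hv w := by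
  apply Subtype.ext
  show v * ((z:A) - (w:A)) * star v = (v * (z:A) * star v) - (v * (w:A) * star v)
  noncomm_ring

lemma cnjL_add (v : A) (hv : IsNrm D v) (z w : ↥D) :
    cnjL v hv (z + w) = cnjL v hv z + cnjL v hv w := by
  apply Subtype.ext
  show v * ((z:A) + (w:A)) * star v = (v * (z:A) * star v) + (v * (w:A) * star v)
  noncomm_ring

lemma cnjL_smul (v : A) (hv : IsNrm D v) (a : ℂ) (z : ↥D) :
    cnjL v hv (a • z) = a • cnjL v hv z := by
  apply Subtype.ext
  show v * (a • (z:A)) * star v = a • (v * (z:A) * star v)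
  rw [mul_smul_comm, smul_mul_assoc]

lemma cnjL_star (v : A) (hv : IsNrm D v) (z : ↥D) :
    cnjL v hv (star z) = star (cnjL v hv z) := by
  apply Subtype.ext
  show v * (star (z:A)) * star v = star (v * (z:A) * star v)
  simp only [star_mul, star_star]; noncomm_ring

lemma cnjL_nonneg (v : A) (hv : IsNrm D v) (z : ↥D) (h : 0 ≤ (z : A)) :
    0 ≤ (cnjL v hv z : A) := by
  have := star_left_conjugate_nonneg h (star v)
  simpa [star_star, cnjL_coe] using this

lemma cnjL_mono (v : A) (hv : IsNrm D v) (z w : ↥D) (h : (z : A) ≤ (w : A)) :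
    (cnjL v hv z : A) ≤ (cnjL v hv w : A) := by
  have := star_left_conjugate_le_conjugate h (star v)
  simpa [star_star, cnjL_coe] using this


/-- The central character-theoretic lemma. -/
lemma key_char (hDcomm : ∀ d ∈ D, ∀ e ∈ D, d * e = e * d)
    {ED : A →ₗ[ℂ] A} (hEDmem : ∀ a, ED a ∈ D) (hEDfix : ∀ d ∈ D, ED d = d)
    (hEDstar : ∀ a, ED (star a) = star (ED a)) (hEDpos : ∀ a : A, 0 ≤ a → 0 ≤ ED a)
    (hEDbimod : ∀ a : A, ∀ d ∈ D, ED (d * a) = d * ED a ∧ ED (a * d) = ED a * d)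
    (n : A) (hn : IsNrm D n) (m : A) (hm : IsNrm D m)
    (c : A) (hc : c ∈ D)
    (hP3 : c * star (star n * ED m * n) = 0)
    (hEk : ED (star n * m * n) = c + star n * ED m * n)
    {d : A} (hd : d ∈ D) (hsd : star d = d) :
    (d * m - m * d) * (n * star c * star n) = 0 := by
  set k : A := star n * m * n with hkdef
  have hk : IsNrm D k := nrmMul (nrmMul (nrmStar hn) hm) hn
  have hEm : ED m ∈ D := hEDmem m
  set d0 : A := star n * ED m * n with hd0def
  have hd0 : d0 ∈ D := (hn _ hEm).2
  have hEkD : ED k ∈ D := hEDmem k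
  set cD : ↥D := ⟨c, hc⟩ with hcD
  set d0D : ↥D := ⟨d0, hd0⟩ with hd0D
  set EkD : ↥D := ⟨ED k, hEkD⟩ with hEkDdef
  set dd : ↥D := ⟨d, hd⟩ with hdd
  set pD : ↥D := ⟨n * star n, nrmP hn⟩ with hpD
  set θm : ↥D := ⟨star m * m, nrmQ hm⟩ with hθm
  set θk : ↥D := ⟨star k * k, nrmQ hk⟩ with hθk
  set NmD : ↥D := cnjR m hm (dd*dd) - cnjR m hm dd * dd - dd * cnjR m hm dd + dd * θm * dd
    with hNmD
  set x : A := (d * m - m * d) * (n * star c * star n) with hx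
  -- the key coercion identity
  have hid : star x * x = ((cnjL n hn cD * NmD * cnjL n hn (star cD) : ↥D) : A) := by
    have hcoe : ((cnjL n hn cD * NmD * cnjL n hn (star cD) : ↥D) : A)
        = (n * c * star n) * ((NmD : A)) * (n * star c * star n) := by
      simp [cnjL_coe, hcD]
    have hNmcoe : (NmD : A) = star m * (d*d) * m - (star m * d * m) * d - d * (star m * d * m)
        + d * (star m * m) * d := by
      simp [hNmD, cnjR_coe, hdd, hθm]
    rw [hcoe, hNmcoe, hx]
    simp only [star_mul, star_sub, star_star, hsd]
    noncomm_ring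
  -- selfadjointness
  have hsax : IsSelfAdjoint (star x * x) := by
    show star (star x * x) = star x * x
    rw [star_mul, star_star]
  -- star k identity
  have hstark : star k = star n * star m * n := by
    rw [hkdef]; simp [star_mul, star_star, mul_assoc]
  -- transport identities
  have hI1 : ∀ z : ↥D, cnjL n hn (cnjR n hn z) = pD * z * pD := by
    intro z
    apply Subtype.ext
    show n * (star n * (z:A) * n) * star n = ((n * star n) * (z:A)) * (n * star n)
    noncomm_ring
  have hI2 : ∀ z : ↥D, cnjL n hn (cnjR k hk z) = pD * cnjR m hm (cnjL n hn z) * pD := by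
    intro z
    apply Subtype.ext
    show n * (star k * (z:A) * k) * star n
        = ((n * star n) * (star m * (n * (z:A) * star n) * m)) * (n * star n)
    rw [hstark, hkdef]
    noncomm_ring
  -- the main vanishing
  have hzero : ((cnjL n hn cD * NmD * cnjL n hn (star cD) : ↥D) : A) = 0 := by
    apply chZeroAllD hDcomm
    · rw [← hid]; exact hsax
    · intro χ
      have hfac : χ (cnjL n hn cD * NmD * cnjL n hn (star cD))
          = χ (cnjL n hn cD) * χ NmD * starRingEnd ℂ (χ (cnjL n hn cD)) := by
        rw [map_mul, map_mul, cnjL_star, chStarD]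
      by_cases hLc : χ (cnjL n hn cD) = 0
      · rw [hfac, hLc]; ring
      · suffices hNv0 : χ NmD = 0 by rw [hfac, hNv0]; ring
        -- χ pD ≠ 0
        have hPne : χ pD ≠ 0 := by
          intro hP0
          have h1 := cnjL_mul hDcomm n hn cD cD
          have h2 : χ (cnjL n hn cD) * χ (cnjL n hn cD) = χ pD * χ (cnjL n hn (cD * cD)) := by
            rw [← map_mul, h1, map_mul, ← hpD]
          rw [hP0, zero_mul] at h2
          exact hLc (by
            have := mul_self_eq_zero.mp h2
            exact this)
        have hPpos : 0 < χ pD := by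
          have h1 : 0 ≤ χ pD := chNonnegD χ pD (by
            show (0:A) ≤ n * star n
            exact mul_star_self_nonneg n)
          exact lt_of_le_of_ne h1 (Ne.symm hPne)
        -- the m-level functional
        set φ : ↥D → ℂ := fun z => χ (cnjR m hm z) with hφ
        set ξ : ℂ := χ θm with hξ
        have hφmul : ∀ z w : ↥D, φ z * φ w = ξ * φ (z * w) := by
          intro z w
          show χ (cnjR m hm z) * χ (cnjR m hm w) = ξ * χ (cnjR m hm (z*w))
          rw [← map_mul, cnjR_mul hDcomm, map_mul, ← hθm, hξ]
        have hφ1 : φ 1 = ξ := by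
          show χ (cnjR m hm 1) = ξ; rw [cnjR_one, ← hθm, hξ]
        have hφsub : ∀ z w : ↥D, φ (z - w) = φ z - φ w := by
          intro z w; show χ (cnjR m hm (z-w)) = _; rw [cnjR_sub, map_sub]
        have hφsmul : ∀ (a : ℂ) (z : ↥D), φ (a • z) = a * φ z := by
          intro a z; show χ (cnjR m hm (a • z)) = _
          rw [cnjR_smul, map_smul, smul_eq_mul]
        have hdec : χ NmD = φ (dd*dd) - φ dd * χ dd - χ dd * φ dd + χ dd * ξ * χ dd := by
          rw [hNmD]
          rw [map_add, map_sub, map_sub, map_mul, map_mul, map_mul, map_mul]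
        by_cases hξ0 : ξ = 0
        · have hφz : ∀ z : ↥D, φ z = 0 := by
            intro z
            have h1 := hφmul z z
            rw [hξ0, zero_mul] at h1
            exact mul_self_eq_zero.mp h1
          rw [hdec, hφz, hφz, hξ0]
          ring
        · -- κ chain
          set κ : ↥D → ℂ := fun z => χ (cnjL n hn z) / χ pD with hκ
          have hκmul : ∀ z w : ↥D, κ z * κ w = κ (z * w) := by
            intro z w
            show (χ (cnjL n hn z) / χ pD) * (χ (cnjL n hn w) / χ pD)
                = χ (cnjL n hn (z*w)) / χ pD
            have h1 : χ (cnjL n hn z) * χ (cnjL n hn w) = χ pD * χ (cnjL n hn (z*w)) := by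
              rw [← map_mul, cnjL_mul hDcomm, map_mul, ← hpD]
            field_simp
            rw [h1]
          have hκ1 : κ 1 = 1 := by
            show χ (cnjL n hn 1) / χ pD = 1
            rw [cnjL_one, ← hpD]
            field_simp
          have hκ0 : κ 0 = 0 := by
            show χ (cnjL n hn 0) / χ pD = 0
            rw [cnjL_zero, map_zero, zero_div]
          have hκadd : ∀ z w : ↥D, κ (z + w) = κ z + κ w := by
            intro z w; show χ (cnjL n hn (z+w)) / χ pD = _
            rw [cnjL_add, map_add, add_div]
          have hκsub : ∀ z w : ↥D, κ (z - w) = κ z - κ w := by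
            intro z w; show χ (cnjL n hn (z-w)) / χ pD = _
            rw [cnjL_sub, map_sub, sub_div]
          have hκsmul : ∀ (a : ℂ) (z : ↥D), κ (a • z) = a * κ z := by
            intro a z; show χ (cnjL n hn (a • z)) / χ pD = _
            rw [cnjL_smul, map_smul, smul_eq_mul, mul_div_assoc]
          have hPconj : starRingEnd ℂ (χ pD) = χ pD := by
            have h1 : star pD = pD := by
              apply Subtype.ext
              show star (n * star n) = n * star n
              rw [star_mul, star_star]
            calc starRingEnd ℂ (χ pD) = χ (star pD) := (chStarD χ pD).symm
              _ = χ pD := by rw [h1]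
          have hκstar : ∀ z : ↥D, κ (star z) = starRingEnd ℂ (κ z) := by
            intro z
            show χ (cnjL n hn (star z)) / χ pD = _
            rw [cnjL_star, chStarD, hκ]
            rw [map_div₀, hPconj]
          have hκnonneg : ∀ z : ↥D, 0 ≤ (z:A) → 0 ≤ κ z := by
            intro z hz
            exact cplx_div_nonneg (chNonnegD χ _ (cnjL_nonneg n hn z hz)) hPpos
          have hκmono : ∀ z w : ↥D, (z:A) ≤ (w:A) → κ z ≤ κ w := by
            intro z w hzw
            exact cplx_div_le_div (chMonoD χ _ _ (cnjL_mono n hn z w hzw)) hPpos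
          have hκc : κ cD ≠ 0 := div_ne_zero hLc hPne
          -- κ d0D = 0
          have hκd0 : κ d0D = 0 := by
            have h1 : cD * star d0D = 0 := by
              apply Subtype.ext
              show c * star d0 = 0
              rw [hd0def]; exact hP3
            have h2 : κ cD * κ (star d0D) = 0 := by rw [hκmul, h1, hκ0]
            have h3 : κ (star d0D) = 0 := (mul_eq_zero.mp h2).resolve_left hκc
            rw [hκstar] at h3
            exact (starRingEnd ℂ).injective (by simpa using h3)
          have hκEk : κ EkD = κ cD := by
            have h1 : EkD = cD + d0D := by
              apply Subtype.ext
              show ED k = c + d0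
              rw [hd0def, hkdef] at *
              exact hEk
            rw [h1, hκadd, hκd0, add_zero]
          -- φk
          set φk : ↥D → ℂ := fun z => κ (cnjR k hk z) with hφk
          set lk : ℂ := κ θk with hlk
          have hφk1 : φk 1 = lk := by
            show κ (cnjR k hk 1) = lk; rw [cnjR_one, ← hθk, hlk]
          have hφkmul : ∀ z w : ↥D, φk z * φk w = lk * φk (z * w) := by
            intro z w
            show κ (cnjR k hk z) * κ (cnjR k hk w) = lk * κ (cnjR k hk (z*w))
            rw [hκmul, cnjR_mul hDcomm, ← hκmul, ← hθk, hlk]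
          have hφksub : ∀ z w : ↥D, φk (z - w) = φk z - φk w := by
            intro z w; show κ (cnjR k hk (z-w)) = _; rw [cnjR_sub, hκsub]
          have hφksmul : ∀ (a : ℂ) (z : ↥D), φk (a • z) = a * φk z := by
            intro a z; show κ (cnjR k hk (a • z)) = _; rw [cnjR_smul, hκsmul]
          have hdomk : ∀ z : ↥D, 0 ≤ (z:A) →
              starRingEnd ℂ (κ cD) * κ z * κ cD ≤ φk z := by
            intro z hz
            have hA : star (ED k) * (z:A) * ED k ≤ star k * (z:A) * k :=
              ce_dom hEDmem hEDfix hEDstar hEDpos hEDbimod k hk z.2 hz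
            have h1 : κ (star EkD * z * EkD) ≤ κ (cnjR k hk z) := by
              apply hκmono
              simpa [hEkDdef, cnjR_coe] using hA
            have h2 : κ (star EkD * z * EkD) = starRingEnd ℂ (κ EkD) * κ z * κ EkD := by
              rw [← hκmul, ← hκmul, hκstar]
            rw [h2, hκEk] at h1
            exact h1
          have h0le1 : (0:A) ≤ ((1 : ↥D) : A) := by
            have := star_mul_self_nonneg (1 : A)
            simpa using this
          have hlkpos : 0 < lk := by
            have h1 := hdomk 1 h0le1
            rw [hφk1, hκ1, mul_one] at h1
            have hpos : 0 < starRingEnd ℂ (κ cD) * κ cD := by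
              have := cplx_conj_self_pos hκc
              calc (0:ℂ) < κ cD * starRingEnd ℂ (κ cD) := this
                _ = starRingEnd ℂ (κ cD) * κ cD := by ring
            exact lt_of_lt_of_le hpos h1
          have hlkne : lk ≠ 0 := ne_of_gt hlkpos
          -- φk = lk • κ
          have hφkkey : ∀ z : ↥D, φk z = lk * κ z := by
            by_contra hcon
            push_neg at hcon
            obtain ⟨y, hy⟩ := hcon
            set u : ↥D := lk • y - (φk y) • 1 with hu
            have hκu : κ u = lk * κ y - φk y := by
              rw [hu, hκsub, hκsmul, hκsmul, hκ1, mul_one]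
            have hκune : κ u ≠ 0 := by
              rw [hκu]; exact sub_ne_zero.mpr (fun h => hy h.symm)
            have hφku : φk u = 0 := by
              rw [hu, hφksub, hφksmul, hφksmul, hφk1]; ring
            set u2 : ↥D := u * star u with hu2
            have hu2nn : 0 ≤ (u2 : A) := by
              have : (u2 : A) = (u : A) * star (u : A) := by simp [hu2]
              rw [this]; exact mul_star_self_nonneg _
            have hκu2 : κ u2 = κ u * starRingEnd ℂ (κ u) := by
              rw [hu2, ← hκmul, hκstar]
            have hκu2pos : 0 < κ u2 := by rw [hκu2]; exact cplx_conj_self_pos hκune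
            have hφku2 : φk u2 = 0 := by
              have h1 := hφkmul u (star u)
              rw [hφku, zero_mul, ← hu2] at h1
              exact (mul_eq_zero.mp h1.symm).resolve_left hlkne
            have h1 := hdomk u2 hu2nn
            rw [hφku2] at h1
            have h2 : 0 < starRingEnd ℂ (κ cD) * κ u2 * κ cD := by
              have hpos : 0 < κ cD * starRingEnd ℂ (κ cD) := cplx_conj_self_pos hκc
              calc (0:ℂ) < (κ cD * starRingEnd ℂ (κ cD)) * κ u2 := mul_pos hpos hκu2pos
                _ = starRingEnd ℂ (κ cD) * κ u2 * κ cD := by ring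
            exact h2.not_ge h1
          -- transport: φk z = χ pD * φ (cnjL n hn z)
          have hT : ∀ z : ↥D, φk z = χ pD * φ (cnjL n hn z) := by
            intro z
            have h1 : χ (cnjL n hn (cnjR k hk z))
                = χ pD * χ (cnjR m hm (cnjL n hn z)) * χ pD := by
              rw [hI2 z, map_mul, map_mul]
            show χ (cnjL n hn (cnjR k hk z)) / χ pD = χ pD * χ (cnjR m hm (cnjL n hn z))
            rw [h1]
            first
            | (field_simp; ring)
            | field_simp
            | ring
          -- main key: φ = ξ χ
          have key : ∀ z : ↥D, φ z = ξ * χ z := by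
            by_contra hcon
            push_neg at hcon
            obtain ⟨y, hy⟩ := hcon
            set u : ↥D := ξ • y - (φ y) • 1 with hu
            have hχu : χ u = ξ * χ y - φ y := by
              rw [hu, map_sub, map_smul, map_smul, map_one, smul_eq_mul, smul_eq_mul, mul_one]
            have hχune : χ u ≠ 0 := by
              rw [hχu]; exact sub_ne_zero.mpr (fun h => hy h.symm)
            have hφu : φ u = 0 := by
              rw [hu, hφsub, hφsmul, hφsmul, hφ1]; ring
            set u2 : ↥D := u * star u with hu2
            have hχu2 : χ u2 = χ u * starRingEnd ℂ (χ u) := by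
              rw [hu2, map_mul, chStarD]
            have hχu2ne : χ u2 ≠ 0 := by
              rw [hχu2]; exact ne_of_gt (cplx_conj_self_pos hχune)
            have hφu2 : φ u2 = 0 := by
              have h1 := hφmul u (star u)
              rw [hφu, zero_mul, ← hu2] at h1
              exact (mul_eq_zero.mp h1.symm).resolve_left hξ0
            -- transport contradiction
            have hstep2 : φ (pD * u2 * pD) = 0 := by
              have e2 : ξ * φ (pD * u2) = φ pD * φ u2 := (hφmul pD u2).symm
              rw [hφu2, mul_zero] at e2
              have e2' : φ (pD * u2) = 0 := by
                rcases mul_eq_zero.mp e2 with h | h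
                · exact absurd h hξ0
                · exact h
              have e1 : ξ * φ ((pD * u2) * pD) = φ (pD * u2) * φ pD := (hφmul (pD*u2) pD).symm
              rw [e2', zero_mul] at e1
              rcases mul_eq_zero.mp e1 with h | h
              · exact absurd h hξ0
              · exact h
            have hstep3 : φk (cnjR n hn u2) = 0 := by
              rw [hT, hI1, hstep2, mul_zero]
            have hstep4 : κ (cnjR n hn u2) = 0 := by
              have h1 := hφkkey (cnjR n hn u2)
              rw [hstep3] at h1
              rcases mul_eq_zero.mp h1.symm with h | h
              · exact absurd h hlkne
              · exact h
            have hstep5 : κ (cnjR n hn u2) = χ pD * χ u2 := by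
              show χ (cnjL n hn (cnjR n hn u2)) / χ pD = χ pD * χ u2
              rw [hI1, map_mul, map_mul]
              first
              | (field_simp; ring)
              | field_simp
              | ring
            rw [hstep5] at hstep4
            rcases mul_eq_zero.mp hstep4 with h | h
            · exact absurd h hPne
            · exact absurd h hχu2ne
          rw [hdec, key (dd*dd), key dd, map_mul]
          ring
  have hx0 : star x * x = 0 := by rw [hid, hzero]
  exact CStarRing.star_mul_self_eq_zero_iff x |>.mp hx0


/-- commutation with all selfadjoint elements of `D` implies commutation with `D`. -/
lemma comm_of_selfadj (z : A) (h : ∀ d ∈ D, star d = d → z * d = d * z) :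
    ∀ d ∈ D, z * d = d * z := by
  intro d hd
  set dR : A := (2⁻¹ : ℂ) • (d + star d) with hdR
  set dI : A := (-(Complex.I)/2) • (d - star d) with hdI
  have hdRD : dR ∈ D := by
    rw [hdR]; exact SMulMemClass.smul_mem _ (add_mem hd (star_mem hd))
  have hdID : dI ∈ D := by
    rw [hdI]; exact SMulMemClass.smul_mem _ (sub_mem hd (star_mem hd))
  have hdRsa : star dR = dR := by
    rw [hdR, star_smul, star_add, star_star]
    congr 1
    · simp
    · rw [add_comm]
  have hdIsa : star dI = dI := by
    rw [hdI, star_smul, star_sub, star_star]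
    have h1 : star (-(Complex.I)/2) = Complex.I / 2 := by
      simp [Complex.star_def]
    rw [h1]
    have h2 : (Complex.I / 2) • (star d - d) = (-(Complex.I)/2) • (d - star d) := by
      have : star d - d = -(d - star d) := by abel
      rw [this, smul_neg, ← neg_smul]
      congr 1
      ring
    rw [h2]
  have hdecomp : d = dR + Complex.I • dI := by
    have hIco : Complex.I * (-(Complex.I)/2) = (2⁻¹ : ℂ) := by
      rw [mul_div_assoc', mul_neg, Complex.I_mul_I]
      norm_num
    rw [hdR, hdI, smul_smul, hIco]
    have h1 : ((2⁻¹:ℂ) + 2⁻¹) • d = d := by norm_num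
    calc d = ((2⁻¹:ℂ) + 2⁻¹) • d + ((2⁻¹:ℂ) • star d - (2⁻¹:ℂ) • star d) := by
          rw [h1]; abel
      _ = (2⁻¹:ℂ) • (d + star d) + (2⁻¹:ℂ) • (d - star d) := by
          rw [add_smul, smul_add, smul_sub]; abel
  have hR := h dR hdRD hdRsa
  have hI := h dI hdID hdIsa
  have hI' : z * (Complex.I • dI) = (Complex.I • dI) * z := by
    rw [mul_smul_comm, smul_mul_assoc, hI]
  rw [hdecomp, mul_add, add_mul, hR, hI']

/-- The core statement: the conditional expectation intertwines conjugation by a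
normalizer. -/
lemma core (hDcomm : ∀ d ∈ D, ∀ e ∈ D, d * e = e * d)
    {ED : A →ₗ[ℂ] A} (hEDmem : ∀ a, ED a ∈ D) (hEDfix : ∀ d ∈ D, ED d = d)
    (hEDstar : ∀ a, ED (star a) = star (ED a)) (hEDpos : ∀ a : A, 0 ≤ a → 0 ≤ ED a)
    (hEDbimod : ∀ a : A, ∀ d ∈ D, ED (d * a) = d * ED a ∧ ED (a * d) = ED a * d)
    (A0 : Submodule ℂ A) (hA0mul : ∀ a ∈ A0, ∀ b ∈ A0, a * b ∈ A0)
    (hD0 : (D : Set A) ⊆ (A0 : Set A))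
    (hDmasa : ∀ a ∈ A0, (∀ d ∈ D, a * d = d * a) → a ∈ D)
    (n : A) (hn : IsNrm D n) (m : A) (hm : IsNrm D m) (hm0 : m ∈ A0) :
    ED (star n * m * n) = star n * ED m * n := by
  have hEm : ED m ∈ D := hEDmem m
  have hC5m : m * star (ED m) = ED m * star (ED m) :=
    c5 hDcomm hEDmem hEDfix hEDstar hEDpos hEDbimod A0 hA0mul hD0 hDmasa m hm hm0
  have hker : (m - ED m) * star (ED m) = 0 := by rw [sub_mul, hC5m, sub_self]
  have hd0 : star n * ED m * n ∈ D := (hn _ hEm).2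
  have hgk : star n * (m - ED m) * n = star n * m * n - star n * ED m * n := by noncomm_ring
  have hEDg : ED (star n * (m - ED m) * n) = ED (star n * m * n) - star n * ED m * n := by
    rw [hgk, map_sub, hEDfix _ hd0]
  have hc : ED (star n * m * n) - star n * ED m * n ∈ D := sub_mem (hEDmem _) hd0
  set c : A := ED (star n * m * n) - star n * ED m * n with hcdef
  -- P2 and P3
  have hsd0 : star (star n * ED m * n) = star n * star (ED m) * n := by
    simp [star_mul, star_star, mul_assoc]
  have hP2 : (star n * (m - ED m) * n) * star (star n * ED m * n) = 0 := by
    have hcomm : (n * star n) * star (ED m) = star (ED m) * (n * star n) :=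
      hDcomm _ (nrmP hn) _ (star_mem hEm)
    calc (star n * (m - ED m) * n) * star (star n * ED m * n)
        = star n * (m - ED m) * ((n * star n) * star (ED m)) * n := by
          rw [hsd0]; noncomm_ring
      _ = star n * (m - ED m) * (star (ED m) * (n * star n)) * n := by rw [hcomm]
      _ = star n * ((m - ED m) * star (ED m)) * ((n * star n) * n) := by noncomm_ring
      _ = 0 := by rw [hker]; simp
  have hP3 : c * star (star n * ED m * n) = 0 := by
    have h1 : ED ((star n * (m - ED m) * n) * star (star n * ED m * n))
        = ED (star n * (m - ED m) * n) * star (star n * ED m * n) :=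
      (hEDbimod _ _ (star_mem hd0)).2
    rw [hP2, map_zero, hEDg] at h1
    rw [hcdef]
    exact h1.symm
  have hEk : ED (star n * m * n) = c + star n * ED m * n := by
    rw [hcdef]; abel
  -- F1 and F2: the element z4
  have hwD : n * star c * star n ∈ D := (hn _ (star_mem hc)).1
  have hz4comm : ∀ d ∈ D, ((m - ED m) * (n * star c * star n)) * d
      = d * ((m - ED m) * (n * star c * star n)) := by
    apply comm_of_selfadj
    intro d hd hsd
    have hF1 : (d * m - m * d) * (n * star c * star n) = 0 :=
      key_char hDcomm hEDmem hEDfix hEDstar hEDpos hEDbimod n hn m hm c hc hP3 hEk hd hsd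
    have hcomm1 : (n * star c * star n) * d = d * (n * star c * star n) :=
      hDcomm _ hwD _ hd
    have hcomm2 : d * ED m = ED m * d := hDcomm _ hd _ hEm
    have h1 : d * ((m - ED m) * (n * star c * star n))
        - ((m - ED m) * (n * star c * star n)) * d
        = (d * m - m * d) * (n * star c * star n)
          + (ED m * d - d * ED m) * (n * star c * star n)
          + ((m - ED m) * (d * (n * star c * star n))
            - (m - ED m) * ((n * star c * star n) * d)) := by
      noncomm_ring
    rw [hcomm1, hcomm2, hF1] at h1
    have h2 : d * ((m - ED m) * (n * star c * star n))
        - ((m - ED m) * (n * star c * star n)) * d = 0 := by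
      rw [h1]; simp
    have := sub_eq_zero.mp h2
    exact this.symm
  have hz4D : (m - ED m) * (n * star c * star n) ∈ D := by
    apply hDmasa _ (hA0mul _ (Submodule.sub_mem A0 hm0 (hD0 hEm)) _ (hD0 hwD))
    exact hz4comm
  have hz40 : (m - ED m) * (n * star c * star n) = 0 := by
    have h1 : ED ((m - ED m) * (n * star c * star n)) = ED (m - ED m) * (n * star c * star n) :=
      (hEDbimod _ _ hwD).2
    have h2 : ED (m - ED m) = 0 := by rw [map_sub, hEDfix _ hEm, sub_self]
    rw [h2, zero_mul] at h1
    calc (m - ED m) * (n * star c * star n)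
        = ED ((m - ED m) * (n * star c * star n)) := (hEDfix _ hz4D).symm
      _ = 0 := h1
  -- F3
  have hF3 : c * (star c * (star n * n)) = 0 := by
    have h1 : star n * ((m - ED m) * (n * star c * star n)) * n
        = (star n * (m - ED m) * n) * (star c * (star n * n)) := by
      noncomm_ring
    have h2 : (star n * (m - ED m) * n) * (star c * (star n * n)) = 0 := by
      rw [← h1, hz40]; simp
    have h3 : ED ((star n * (m - ED m) * n) * (star c * (star n * n)))
        = ED (star n * (m - ED m) * n) * (star c * (star n * n)) :=
      (hEDbimod _ _ (mul_mem (star_mem hc) (nrmQ hn))).2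
    rw [h2, map_zero, hEDg] at h3
    exact h3.symm
  -- the Cauchy-Schwarz bound
  have hXsa : star (ED m * star (ED m)) = ED m * star (ED m) := by
    rw [star_mul, star_star]
  have e3 : m * ((n * star n) * star (ED m)) = (ED m * star (ED m)) * (n * star n) := by
    calc m * ((n * star n) * star (ED m)) = m * (star (ED m) * (n * star n)) := by
          rw [hDcomm _ (nrmP hn) _ (star_mem hEm)]
      _ = (m * star (ED m)) * (n * star n) := by rw [mul_assoc]
      _ = (ED m * star (ED m)) * (n * star n) := by rw [hC5m]
  have e4 : ED m * ((n * star n) * star m) = (n * star n) * (ED m * star (ED m)) := by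
    have h1 := congrArg star e3
    have h2 : star (m * ((n * star n) * star (ED m)))
        = (ED m * (n * star n)) * star m := by
      simp [star_mul, star_star, mul_assoc]
    have h3 : star ((ED m * star (ED m)) * (n * star n))
        = (n * star n) * (ED m * star (ED m)) := by
      rw [star_mul]
      rw [hXsa]
      congr 1
      rw [star_mul, star_star]
    rw [h2, h3] at h1
    calc ED m * ((n * star n) * star m) = (ED m * (n * star n)) * star m := by
          rw [← mul_assoc]
      _ = (n * star n) * (ED m * star (ED m)) := h1
  have e5 : ED m * ((n * star n) * star (ED m)) = (ED m * star (ED m)) * (n * star n) := by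
    calc ED m * ((n * star n) * star (ED m)) = ED m * (star (ED m) * (n * star n)) := by
          rw [hDcomm _ (nrmP hn) _ (star_mem hEm)]
      _ = (ED m * star (ED m)) * (n * star n) := by rw [mul_assoc]
  have hRid : (m - ED m) * (n * star n) * (star m - star (ED m))
      = m * (n * star n) * star m - (n * star n) * (ED m * star (ED m)) := by
    have expand : (m - ED m) * (n * star n) * (star m - star (ED m))
        = m * ((n * star n) * star m) - ED m * ((n * star n) * star m)
          - m * ((n * star n) * star (ED m)) + ED m * ((n * star n) * star (ED m)) := by
      noncomm_ring
    rw [expand, e3, e4, e5]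
    have : m * ((n * star n) * star m) = m * (n * star n) * star m := by rw [← mul_assoc]
    rw [this]
    abel
  have hRD : (m - ED m) * (n * star n) * (star m - star (ED m)) ∈ D := by
    rw [hRid]
    exact sub_mem (hm _ (nrmP hn)).1 (mul_mem (nrmP hn) (mul_mem hEm (star_mem hEm)))
  have hGmem : star n * ((m - ED m) * (n * star n) * (star m - star (ED m))) * n ∈ D :=
    (hn _ hRD).2
  have hG : (star n * (m - ED m) * n) * star (star n * (m - ED m) * n)
      = star n * ((m - ED m) * (n * star n) * (star m - star (ED m))) * n := by
    simp only [star_mul, star_star, star_sub]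
    noncomm_ring
  have hCS : c * star c
      ≤ star n * ((m - ED m) * (n * star n) * (star m - star (ED m))) * n := by
    have h1 := cs_self hEDmem hEDfix hEDstar hEDpos hEDbimod (star n * (m - ED m) * n)
    rw [hEDg] at h1
    rw [hG, hEDfix _ hGmem] at h1
    exact h1
  -- character finish
  have hall : ∀ χ : WeakDual.characterSpace ℂ ↥D,
      χ ((⟨c, hc⟩ : ↥D) * star (⟨c, hc⟩ : ↥D)) = 0 := by
    intro χ
    have hccnn : (0:A) ≤ ((( ⟨c, hc⟩ : ↥D) * star (⟨c, hc⟩ : ↥D) : ↥D) : A) := by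
      have hco : ((( ⟨c, hc⟩ : ↥D) * star (⟨c, hc⟩ : ↥D) : ↥D) : A) = c * star c := by simp
      rw [hco]; exact mul_star_self_nonneg c
    by_cases hq : χ (⟨star n * n, nrmQ hn⟩ : ↥D) = 0
    · have hG0 : χ (cnjR n hn ⟨_, hRD⟩) = 0 := by
        have h1 : χ (cnjR n hn ⟨_, hRD⟩) * χ (cnjR n hn ⟨_, hRD⟩)
            = χ (⟨star n * n, nrmQ hn⟩ : ↥D) * χ (cnjR n hn (⟨_, hRD⟩ * ⟨_, hRD⟩)) := by
          rw [← map_mul, cnjR_mul hDcomm, map_mul]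
        rw [hq, zero_mul] at h1
        exact mul_self_eq_zero.mp h1
      have hle : χ ((⟨c, hc⟩ : ↥D) * star (⟨c, hc⟩ : ↥D)) ≤ χ (cnjR n hn ⟨_, hRD⟩) := by
        apply chMonoD
        have hco : ((( ⟨c, hc⟩ : ↥D) * star (⟨c, hc⟩ : ↥D) : ↥D) : A) = c * star c := by simp
        rw [hco, cnjR_coe]
        exact hCS
      have hge := chNonnegD χ _ hccnn
      rw [hG0] at hle
      exact le_antisymm hle hge
    · have h1 : (⟨c, hc⟩ : ↥D) * (star (⟨c, hc⟩ : ↥D) * (⟨star n * n, nrmQ hn⟩ : ↥D)) = 0 := by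
        apply Subtype.ext
        show c * (star c * (star n * n)) = 0
        exact hF3
      have h2 : χ (⟨c, hc⟩ : ↥D) * (χ (star (⟨c, hc⟩ : ↥D)) * χ (⟨star n * n, nrmQ hn⟩ : ↥D))
          = 0 := by
        rw [← map_mul, ← map_mul, h1, map_zero]
      rw [map_mul]
      rcases mul_eq_zero.mp h2 with h | h
      · rw [h, zero_mul]
      · rcases mul_eq_zero.mp h with h' | h'
        · rw [h', mul_zero]
        · exact absurd h' hq
  have hcc0 : c * star c = 0 := by
    have hsa : IsSelfAdjoint ((((⟨c, hc⟩ : ↥D) * star (⟨c, hc⟩ : ↥D)) : ↥D) : A) := by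
      have hco : ((( ⟨c, hc⟩ : ↥D) * star (⟨c, hc⟩ : ↥D) : ↥D) : A) = c * star c := by simp
      rw [hco]
      show star (c * star c) = c * star c
      rw [star_mul, star_star]
    have := chZeroAllD hDcomm _ hsa hall
    simpa using this
  have hc0 : c = 0 := by
    have h1 : star (star c) * star c = 0 := by rw [star_star]; exact hcc0
    have h2 := CStarRing.star_mul_self_eq_zero_iff (star c) |>.mp h1
    have := congrArg star h2
    simpa using this
  have := sub_eq_zero.mp (hcdef ▸ hc0)
  exact this


/-- Extension of `core` to the closed span. -/
lemma coreAll (hDcomm : ∀ d ∈ D, ∀ e ∈ D, d * e = e * d)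
    {ED : A →ₗ[ℂ] A} (hEDmem : ∀ a, ED a ∈ D) (hEDfix : ∀ d ∈ D, ED d = d)
    (hEDstar : ∀ a, ED (star a) = star (ED a)) (hEDpos : ∀ a : A, 0 ≤ a → 0 ≤ ED a)
    (hEDbimod : ∀ a : A, ∀ d ∈ D, ED (d * a) = d * ED a ∧ ED (a * d) = ED a * d)
    (hEDcontr : ∀ a, ‖ED a‖ ≤ ‖a‖)
    (A0 : Submodule ℂ A) (hA0mul : ∀ a ∈ A0, ∀ b ∈ A0, a * b ∈ A0)
    (hD0 : (D : Set A) ⊆ (A0 : Set A))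
    (hDmasa : ∀ a ∈ A0, (∀ d ∈ D, a * d = d * a) → a ∈ D)
    (n : A) (hn : IsNrm D n)
    (b : A)
    (hb : b ∈ closure (↑(Submodule.span ℂ
      {m : A | m ∈ A0 ∧ ∀ d ∈ D, m * d * star m ∈ D ∧ star m * d * m ∈ D}) : Set A)) :
    ED (star n * b * n) = star n * ED b * n := by
  have hEDcont : Continuous fun a : A => ED a :=
    AddMonoidHomClass.continuous_of_bound ED 1 (fun a => by simpa using hEDcontr a)
  have hconj : Continuous fun a : A => star n * a * n := by
    have h1 : Continuous fun a : A => star n * a := continuous_mul_left (star n)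
    have h2 : Continuous fun a : A => a * n := continuous_mul_right n
    exact h2.comp h1
  have hclosed : IsClosed {b : A | ED (star n * b * n) = star n * ED b * n} := by
    apply isClosed_eq
    · exact hEDcont.comp hconj
    · have h1 : Continuous fun a : A => star n * ED a := (continuous_mul_left (star n)).comp hEDcont
      exact (continuous_mul_right n).comp h1
  have hspan : (↑(Submodule.span ℂ
      {m : A | m ∈ A0 ∧ ∀ d ∈ D, m * d * star m ∈ D ∧ star m * d * m ∈ D}) : Set A)
      ⊆ {b : A | ED (star n * b * n) = star n * ED b * n} := by
    intro b hbsp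
    refine Submodule.span_induction ?_ ?_ ?_ ?_ hbsp
    · intro m hmset
      exact core hDcomm hEDmem hEDfix hEDstar hEDpos hEDbimod A0 hA0mul hD0 hDmasa
        n hn m hmset.2 hmset.1
    · show ED (star n * 0 * n) = star n * ED 0 * n
      simp
    · intro x y _ _ hx hy
      show ED (star n * (x + y) * n) = star n * ED (x + y) * n
      have h1 : star n * (x + y) * n = star n * x * n + star n * y * n := by noncomm_ring
      rw [h1, map_add, map_add, hx, hy]
      noncomm_ring
    · intro a x _ hx
      show ED (star n * (a • x) * n) = star n * ED (a • x) * n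
      have h1 : star n * (a • x) * n = a • (star n * x * n) := by
        rw [mul_smul_comm, smul_mul_assoc]
      rw [h1, map_smul, map_smul, hx, mul_smul_comm, smul_mul_assoc]
  exact closure_minimal hspan hclosed hb


end Core

section Grading
variable {A : Type*} [NormedRing A] [StarRing A] [CStarRing A] [NormedAlgebra ℂ A]
  [CompleteSpace A] [StarModule ℂ A] [PartialOrder A] [StarOrderedRing A]
  {Γ : Type*} [AddCommGroup Γ]

/-- `Φ₀` intertwines conjugation by a homogeneous element. -/
lemma e0conj (Agr : Γ → Submodule ℂ A)
    (hgr_mul : ∀ s t : Γ, ∀ a ∈ Agr t, ∀ b ∈ Agr s, a * b ∈ Agr (t + s))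
    (hgr_star : ∀ t : Γ, ∀ a ∈ Agr t, star a ∈ Agr (-t))
    (hgr_dense : Dense (↑(⨆ t, Agr t) : Set A))
    (E0 : A →ₗ[ℂ] A)
    (hE0fix : ∀ a ∈ Agr 0, E0 a = a)
    (hE0t : ∀ t : Γ, t ≠ 0 → ∀ a ∈ Agr t, E0 a = 0)
    (hE0contr : ∀ a, ‖E0 a‖ ≤ ‖a‖)
    (n : A) (t : Γ) (hnt : n ∈ Agr t) (a : A) :
    E0 (star n * a * n) = star n * E0 a * n := by
  have hE0cont : Continuous fun a : A => E0 a :=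
    AddMonoidHomClass.continuous_of_bound E0 1 (fun a => by simpa using hE0contr a)
  have hconj : Continuous fun a : A => star n * a * n := by
    have h1 : Continuous fun a : A => star n * a := continuous_mul_left (star n)
    have h2 : Continuous fun a : A => a * n := continuous_mul_right n
    exact h2.comp h1
  have hclosed : IsClosed {a : A | E0 (star n * a * n) = star n * E0 a * n} := by
    apply isClosed_eq
    · exact hE0cont.comp hconj
    · have h1 : Continuous fun a : A => star n * E0 a := (continuous_mul_left (star n)).comp hE0cont
      exact (continuous_mul_right n).comp h1
  have hsub : (↑(⨆ s, Agr s) : Set A) ⊆ {a : A | E0 (star n * a * n) = star n * E0 a * n} := by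
    intro a ha
    refine Submodule.iSup_induction Agr (motive := fun x => E0 (star n * x * n) = star n * E0 x * n)
      ha ?_ ?_ ?_
    · intro s a ha
      have h1 : star n ∈ Agr (-t) := hgr_star t n hnt
      have h2 : star n * a ∈ Agr (-t + s) := hgr_mul s (-t) (star n) h1 a ha
      have h3 : star n * a * n ∈ Agr (-t + s + t) := hgr_mul t (-t + s) _ h2 n hnt
      have hidx : -t + s + t = s := by abel
      rw [hidx] at h3
      by_cases hs : s = 0
      · subst hs
        rw [hE0fix _ h3, hE0fix _ ha]
      · rw [hE0t s hs _ h3, hE0t s hs _ ha]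
        simp
    · show E0 (star n * 0 * n) = star n * E0 0 * n
      simp
    · intro x y hx hy
      show E0 (star n * (x + y) * n) = star n * E0 (x + y) * n
      have h1 : star n * (x + y) * n = star n * x * n + star n * y * n := by noncomm_ring
      rw [h1, map_add, map_add, hx, hy]
      noncomm_ring
  have ha : a ∈ closure (↑(⨆ s, Agr s) : Set A) := by
    rw [hgr_dense.closure_eq]; trivial
  exact closure_minimal hsub hclosed ha

end Grading

end GCS10

/-- Let `(A,D)` be a `Γ`-Cartan pair with faithful conditional expectation `Δ = E ∘ Φ₀ : A → D`.  Then for every homogeneous normalizer `n` of `D` and every `a ∈ A`, `n* Δ(a) n = Δ(n* a n)`. -/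
theorem gamma_cartan_stmt10
    {A : Type*} [NormedRing A] [StarRing A] [CStarRing A] [NormedAlgebra ℂ A]
    [CompleteSpace A] [StarModule ℂ A] [PartialOrder A] [StarOrderedRing A]
    {Γ : Type*} [AddCommGroup Γ]
    -- `A` is topologically graded by `Γ` (with linearly independent graded subspaces):
    (Agr : Γ → Submodule ℂ A)
    (hgr_closed : ∀ t, IsClosed (Agr t : Set A))
    (hgr_mul : ∀ s t : Γ, ∀ a ∈ Agr t, ∀ b ∈ Agr s, a * b ∈ Agr (t + s))
    (hgr_star : ∀ t : Γ, ∀ a ∈ Agr t, star a ∈ Agr (-t))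
    (hgr_indep : iSupIndep Agr)
    (hgr_dense : Dense (↑(⨆ t, Agr t) : Set A))
    -- with a faithful conditional expectation `E0 = Φ₀` onto the degree-zero subspace `A₀`:
    (E0 : A →ₗ[ℂ] A)
    (hE0mem : ∀ a, E0 a ∈ Agr 0)
    (hE0fix : ∀ a ∈ Agr 0, E0 a = a)
    (hE0t : ∀ t : Γ, t ≠ 0 → ∀ a ∈ Agr t, E0 a = 0)
    (hE0star : ∀ a, E0 (star a) = star (E0 a))
    (hE0contr : ∀ a, ‖E0 a‖ ≤ ‖a‖)
    (hE0pos : ∀ a : A, 0 ≤ a → 0 ≤ E0 a)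
    (hE0bimod : ∀ a : A, ∀ b ∈ Agr 0, E0 (b * a) = b * E0 a ∧ E0 (a * b) = E0 a * b)
    (hE0faith : ∀ a : A, E0 (star a * a) = 0 → a = 0)
    -- `D` is a Cartan subalgebra of `A₀`: a closed abelian *-subalgebra,
    (D : StarSubalgebra ℂ A)
    (hD0 : (D : Set A) ⊆ (Agr 0 : Set A))
    (hDclosed : IsClosed (D : Set A))
    (hDcomm : ∀ d ∈ D, ∀ e ∈ D, d * e = e * d)
    -- maximal abelian in `A₀`,
    (hDmasa : ∀ a ∈ Agr 0, (∀ d ∈ D, a * d = d * a) → a ∈ D)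
    -- containing an approximate unit for `A₀`,
    (hDau : ∃ (ι : Type) (l : Filter ι) (e : ι → A), l.NeBot ∧
      (∀ i, e i ∈ D ∧ 0 ≤ e i ∧ ‖e i‖ ≤ 1) ∧
      ∀ a ∈ Agr 0, Filter.Tendsto (fun i => e i * a) l (nhds a) ∧
        Filter.Tendsto (fun i => a * e i) l (nhds a))
    -- whose normalizers in `A₀` generate `A₀`,
    (hD0gen : ∀ a ∈ Agr 0, a ∈ closure (↑(Submodule.span ℂ
      {n : A | n ∈ Agr 0 ∧ ∀ d ∈ D, n * d * star n ∈ D ∧ star n * d * n ∈ D}) : Set A))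
    -- with a faithful conditional expectation `ED = E` of `A₀` onto `D`:
    (ED : A →ₗ[ℂ] A)
    (hEDmem : ∀ a, ED a ∈ D)
    (hEDfix : ∀ d ∈ D, ED d = d)
    (hEDstar : ∀ a, ED (star a) = star (ED a))
    (hEDcontr : ∀ a, ‖ED a‖ ≤ ‖a‖)
    (hEDpos : ∀ a : A, 0 ≤ a → 0 ≤ ED a)
    (hEDbimod : ∀ a : A, ∀ d ∈ D, ED (d * a) = d * ED a ∧ ED (a * d) = ED a * d)
    (hEDfaith : ∀ a ∈ Agr 0, ED (star a * a) = 0 → a = 0)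
    -- and the normalizers `N(A,D)` of `D` in `A` densely span `A`:
    (hNdense : Dense (↑(Submodule.span ℂ
      {n : A | ∀ d ∈ D, n * d * star n ∈ D ∧ star n * d * n ∈ D}) : Set A))
    -- `n` is a homogeneous normalizer of `D`:
    (n : A) (t : Γ) (hnt : n ∈ Agr t)
    (hn : ∀ d ∈ D, n * d * star n ∈ D ∧ star n * d * n ∈ D) :
    ∀ a : A, star n * ED (E0 a) * n = ED (E0 (star n * a * n)) := by
  intro a
  haveI : IsClosed (D : Set A) := hDclosed
  have hA0mul : ∀ x ∈ Agr 0, ∀ y ∈ Agr 0, x * y ∈ Agr 0 := by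
    intro x hx y hy
    have h := hgr_mul 0 0 x hx y hy
    simpa using h
  have h1 : E0 (star n * a * n) = star n * E0 a * n :=
    GCS10.e0conj Agr hgr_mul hgr_star hgr_dense E0 hE0fix hE0t hE0contr n t hnt a
  have hb : E0 a ∈ Agr 0 := hE0mem a
  have h2 : ED (star n * E0 a * n) = star n * ED (E0 a) * n :=
    GCS10.coreAll hDcomm hEDmem hEDfix hEDstar hEDpos hEDbimod hEDcontr (Agr 0) hA0mul hD0
      hDmasa n hn (E0 a) (hD0gen _ hb)
  rw [h1]
  exact h2.symm
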